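/- arXiv:1410.0083 — 2 statements merged into one kernel-verified Lean document; each statement's English description precedes it below -/
import Mathlib

section
/- Let Q be a finite nonempty state space, κ a Markov kernel from Q to Q, and P_q the trajectory measure of the chain (X_n) started at q. Suppose there are ε > 0, m ∈ ℕ, and a rank function rk : Q → ℕ with rk(q) ≤ m for all q, such that for every state q with rk(q) > 0 one has κ(q)({ q' | rk(q') < rk(q) }) ≥ ε. Let W_0 = { q | rk(q) = 0 }. Then for every start state q, the probability of hitting W_0 within m steps satisfies P_q( ∃ k ≤ m, X_k ∈ W_0 ) ≥ ε^m. -/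
open MeasureTheory ProbabilityTheory ENNReal

/-- `P` is the family of trajectory (Ionescu–Tulcea) measures of the canonical
Markov chain with transition kernel `κ` on the finite discrete state space `Q`:
`P q` is the law of `(X₀, X₁, …)` with `X₀ = q`, characterized by its values on
the cylinder sets (which uniquely determine a measure on `ℕ → Q`). -/
def IsTrajMeasure {Q : Type*} [Fintype Q] [MeasurableSpace Q]
    [DiscreteMeasurableSpace Q] (κ : Kernel Q Q) (P : Q → Measure (ℕ → Q)) : Prop :=
  ∀ (q : Q) (n : ℕ) (w : ℕ → Q),
    P q {ω | ∀ k ≤ n, ω k = w k} =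
      Set.indicator ({q} : Set Q) (1 : Q → ℝ≥0∞) (w 0) *
        ∏ i ∈ Finset.range n, κ (w i) {w (i + 1)}

set_option linter.unusedSectionVars false
set_option linter.unusedVariables false

section Aux

open Classical

variable {Q : Type*} [Fintype Q] [MeasurableSpace Q] [DiscreteMeasurableSpace Q]

/-- states allowed as next step from `q` -/
noncomputable def allowedSet (rk : Q → ℕ) (q : Q) : Finset Q :=
  if rk q = 0 then Finset.univ else Finset.univ.filter (fun q' => rk q' < rk q)

/-- lower bound recursion -/
noncomputable def Hfun (κ : Kernel Q Q) (rk : Q → ℕ) : ℕ → Q → ℝ≥0∞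
  | 0, _ => 1
  | n+1, q => ∑ q' ∈ allowedSet rk q, κ q {q'} * Hfun κ rk n q'

lemma measure_allowedSet (κ : Kernel Q Q) [IsMarkovKernel κ] (rk : Q → ℕ)
    (ε : ℝ≥0∞) (hε1 : ε ≤ 1)
    (hstep : ∀ q : Q, 0 < rk q → ε ≤ κ q {q' | rk q' < rk q}) (q : Q) :
    ε ≤ κ q (allowedSet rk q : Set Q) := by
  unfold allowedSet
  by_cases h : rk q = 0
  · simp [h, measure_univ, hε1]
  · rw [if_neg h]
    refine le_trans (hstep q (Nat.pos_of_ne_zero h)) (measure_mono ?_)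
    intro x hx
    simpa using hx

lemma Hfun_ge (κ : Kernel Q Q) [IsMarkovKernel κ] (rk : Q → ℕ)
    (ε : ℝ≥0∞) (hε1 : ε ≤ 1)
    (hstep : ∀ q : Q, 0 < rk q → ε ≤ κ q {q' | rk q' < rk q}) :
    ∀ n q, ε ^ n ≤ Hfun κ rk n q := by
  intro n
  induction n with
  | zero => intro q; simp [Hfun]
  | succ n ih =>
    intro q
    have h1 : ∑ q' ∈ allowedSet rk q, κ q {q'} * ε ^ n ≤ Hfun κ rk (n+1) q := by
      rw [Hfun]
      exact Finset.sum_le_sum fun q' _ => mul_le_mul_right (ih q') _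
    refine le_trans ?_ h1
    rw [← Finset.sum_mul]
    have h2 : ∑ q' ∈ allowedSet rk q, κ q {q'} = κ q (allowedSet rk q : Set Q) := by
      have := MeasureTheory.sum_measure_preimage_singleton (μ := κ q)
        (allowedSet rk q) (f := id) (fun y _ => by measurability)
      simpa using this
    rw [pow_succ, mul_comm (ε ^ n) ε]
    calc ε * ε ^ n ≤ κ q (allowedSet rk q : Set Q) * ε ^ n :=
          mul_le_mul_left (measure_allowedSet κ rk ε hε1 hstep q) _
      _ = _ := by rw [h2]

/-- chain condition: each step moves into the allowed set -/
def ChainW (rk : Q → ℕ) {m : ℕ} (t : Fin (m+1) → Q) : Prop :=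
  ∀ i : Fin m, t i.succ ∈ allowedSet rk (t i.castSucc)

noncomputable def wgt (κ : Kernel Q Q) {m : ℕ} (t : Fin (m+1) → Q) : ℝ≥0∞ :=
  ∏ i : Fin m, κ (t i.castSucc) {t i.succ}

lemma chain_cons (rk : Q → ℕ) {n : ℕ} (x : Q) (s : Fin (n+1) → Q) :
    ChainW rk (Fin.cons x s) ↔ s 0 ∈ allowedSet rk x ∧ ChainW rk s := by
  constructor
  · intro h
    refine ⟨?_, fun i => ?_⟩
    · have := h 0
      simpa using this
    · have := h i.succ
      rw [← Fin.succ_castSucc] at this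
      simpa [Fin.cons_succ] using this
  · rintro ⟨h0, h⟩ i
    refine Fin.cases ?_ (fun j => ?_) i
    · simpa using h0
    · rw [← Fin.succ_castSucc]
      simpa [Fin.cons_succ] using h j

lemma wgt_cons (κ : Kernel Q Q) {n : ℕ} (x : Q) (s : Fin (n+1) → Q) :
    wgt κ (Fin.cons x s) = κ x {s 0} * wgt κ s := by
  unfold wgt
  rw [Fin.prod_univ_succ]
  congr 1

/-- `Hfun` equals the sum of weights of chain words starting at `q`. -/
lemma Hfun_eq_sum (κ : Kernel Q Q) (rk : Q → ℕ) :
    ∀ (n : ℕ) (q : Q), Hfun κ rk n q =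
      ∑ t : Fin (n+1) → Q, if t 0 = q ∧ ChainW rk t then wgt κ t else 0 := by
  intro n
  induction n with
  | zero =>
    intro q
    rw [Hfun]
    rw [Fintype.sum_eq_single (fun _ : Fin 1 => q)]
    · have : (fun _ : Fin 1 => q) 0 = q ∧ ChainW rk (fun _ : Fin 1 => q) :=
        ⟨rfl, fun i => i.elim0⟩
      rw [if_pos this]
      simp [wgt]
    · intro t ht
      rw [if_neg]
      rintro ⟨h0, -⟩
      apply ht
      funext i
      have : i = 0 := Subsingleton.elim i 0
      rw [this, h0]
  | succ n ih =>
    intro q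
    have hcons : (∑ t : Fin (n+2) → Q, if t 0 = q ∧ ChainW rk t then wgt κ t else 0)
        = ∑ p : Q × (Fin (n+1) → Q),
            (if p.1 = q ∧ (p.2 0 ∈ allowedSet rk p.1 ∧ ChainW rk p.2)
              then κ p.1 {p.2 0} * wgt κ p.2 else 0) := by
      refine (Fintype.sum_equiv (Fin.consEquiv fun _ => Q) _ _ fun p => ?_).symm
      have he : (Fin.consEquiv fun _ => Q) p = Fin.cons p.1 p.2 := rfl
      rw [he]
      simp only [Fin.cons_zero, chain_cons, wgt_cons]
    rw [hcons, Fintype.sum_prod_type, Hfun]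
    rw [Fintype.sum_eq_single q ?later]
    case later =>
      intro x hx
      apply Finset.sum_eq_zero
      intro s _
      rw [if_neg]
      rintro ⟨h, -⟩
      exact hx h
    calc ∑ q' ∈ allowedSet rk q, κ q {q'} * Hfun κ rk n q'
        = ∑ q' ∈ allowedSet rk q, ∑ s : Fin (n+1) → Q,
            (if s 0 = q' ∧ ChainW rk s then κ q {q'} * wgt κ s else 0) := by
          refine Finset.sum_congr rfl fun q' _ => ?_
          rw [ih, Finset.mul_sum]
          exact Finset.sum_congr rfl fun s _ => by rw [mul_ite, mul_zero]
      _ = ∑ s : Fin (n+1) → Q, ∑ q' ∈ allowedSet rk q,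
            (if s 0 = q' ∧ ChainW rk s then κ q {q'} * wgt κ s else 0) := Finset.sum_comm
      _ = ∑ s : Fin (n+1) → Q,
            (if q = q ∧ (s 0 ∈ allowedSet rk q ∧ ChainW rk s) then κ q {s 0} * wgt κ s else 0) := by
          refine Finset.sum_congr rfl fun s _ => ?_
          by_cases hc : ChainW rk s
          · simp only [hc, and_true, eq_self_iff_true, true_and]
            rw [Finset.sum_ite_eq (allowedSet rk q) (s 0) (fun q' => κ q {q'} * wgt κ s)]
          · simp [hc]


variable {m : ℕ}

/-- extension of a finite word to an infinite one -/
def extW (m : ℕ) (t : Fin (m+1) → Q) : ℕ → Q :=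
  fun k => t ⟨min k m, Nat.lt_succ_of_le (min_le_right _ _)⟩

lemma extW_of_le (t : Fin (m+1) → Q) {k : ℕ} (hk : k ≤ m) :
    extW m t k = t ⟨k, Nat.lt_succ_of_le hk⟩ := by
  unfold extW
  congr 1
  exact Fin.ext (by simp [Nat.min_eq_left hk])

lemma extW_val (t : Fin (m+1) → Q) (j : Fin (m+1)) : extW m t j.val = t j := by
  rw [extW_of_le t (Nat.lt_succ_iff.mp j.isLt)]

def cylW (m : ℕ) (t : Fin (m+1) → Q) : Set (ℕ → Q) :=
  {ω | ∀ k ≤ m, ω k = extW m t k}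

lemma measurable_cylW (t : Fin (m+1) → Q) : MeasurableSet (cylW m t) := by
  have : cylW m t = ⋂ (k : ℕ) (_ : k ≤ m), (fun ω : ℕ → Q => ω k) ⁻¹' {extW m t k} := by
    ext ω
    simp [cylW, Set.mem_iInter]
  rw [this]
  exact MeasurableSet.iInter fun k => MeasurableSet.iInter fun _ =>
    (measurable_pi_apply k) (MeasurableSet.singleton _)

lemma disjoint_cylW {t t' : Fin (m+1) → Q} (h : t ≠ t') :
    Disjoint (cylW m t) (cylW m t') := by
  rw [Set.disjoint_left]
  intro ω hω hω'
  apply h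
  funext j
  have h1 := hω j.val (Nat.lt_succ_iff.mp j.isLt)
  have h2 := hω' j.val (Nat.lt_succ_iff.mp j.isLt)
  rw [extW_val] at h1 h2
  rw [← h1, ← h2]

lemma P_cylW (κ : Kernel Q Q) (P : Q → Measure (ℕ → Q)) (hP : IsTrajMeasure κ P)
    (q : Q) (t : Fin (m+1) → Q) :
    P q (cylW m t) =
      Set.indicator ({q} : Set Q) (1 : Q → ℝ≥0∞) (t 0) * wgt κ t := by
  have h := hP q m (extW m t)
  have h0 : extW m t 0 = t 0 := extW_val t 0
  rw [h0] at h
  rw [show cylW m t = {ω | ∀ k ≤ m, ω k = extW m t k} from rfl, h]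
  congr 1
  rw [← Fin.prod_univ_eq_prod_range (fun i => κ (extW m t i) {extW m t (i + 1)}) m]
  refine Finset.prod_congr rfl fun i _ => ?_
  have hc : extW m t i.val = t i.castSucc := by
    have := extW_val t i.castSucc
    simpa using this
  have hs : extW m t (i.val + 1) = t i.succ := by
    have := extW_val t i.succ
    simpa using this
  rw [hc, hs]

lemma chain_hits (rk : Q → ℕ) (t : Fin (m+1) → Q) (h : ChainW rk t)
    (hrk0 : rk (t 0) ≤ m) : ∃ k : Fin (m+1), rk (t k) = 0 := by
  by_contra hcon
  push_neg at hcon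
  have key : ∀ j : ℕ, ∀ hj : j ≤ m, rk (t ⟨j, Nat.lt_succ_of_le hj⟩) + j ≤ rk (t 0) := by
    intro j
    induction j with
    | zero => intro hj; simp
    | succ j ihj =>
      intro hj
      have hjm : j < m := hj
      have hjle : j ≤ m := Nat.le_of_lt hjm
      have hstep := h ⟨j, hjm⟩
      have hcast : (⟨j, hjm⟩ : Fin m).castSucc = ⟨j, Nat.lt_succ_of_le hjle⟩ := rfl
      have hsucc : (⟨j, hjm⟩ : Fin m).succ = ⟨j + 1, Nat.lt_succ_of_le hj⟩ := rfl
      rw [hcast, hsucc] at hstep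
      have hne : rk (t ⟨j, Nat.lt_succ_of_le hjle⟩) ≠ 0 := hcon _
      unfold allowedSet at hstep
      rw [if_neg hne] at hstep
      have hlt : rk (t ⟨j + 1, Nat.lt_succ_of_le hj⟩) < rk (t ⟨j, Nat.lt_succ_of_le hjle⟩) := by
        simpa using hstep
      have := ihj hjle
      omega
  have h1 := key m le_rfl
  have h2 := hcon ⟨m, Nat.lt_succ_of_le le_rfl⟩
  omega

end Aux

/-- Suppose `rk : Q → ℕ` is a rank function bounded by `m` such that
from every state of positive rank the kernel moves to a state of strictly
smaller rank with probability at least `ε`. Let `W₀ = {q | rk q = 0}`. Then for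
every start state `q`, the probability of hitting `W₀` within `m` steps is at
least `ε ^ m`. -/
theorem traj_hits_rank_zero {Q : Type*} [Fintype Q] [Nonempty Q]
    [MeasurableSpace Q] [DiscreteMeasurableSpace Q]
    (κ : Kernel Q Q) [IsMarkovKernel κ]
    (P : Q → Measure (ℕ → Q)) (hprob : ∀ q, IsProbabilityMeasure (P q))
    (hP : IsTrajMeasure κ P)
    (ε : ℝ≥0∞) (hε : 0 < ε) (hε1 : ε ≤ 1) (m : ℕ) (rk : Q → ℕ)
    (hrk : ∀ q : Q, rk q ≤ m)
    (hstep : ∀ q : Q, 0 < rk q → ε ≤ κ q {q' | rk q' < rk q}) :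
    ∀ q : Q, ε ^ m ≤ P q {ω | ∃ k ≤ m, ω k ∈ {q' : Q | rk q' = 0}} := by
  classical
  intro q
  set Sg : Finset (Fin (m+1) → Q) :=
    Finset.univ.filter (fun t => t 0 = q ∧ ChainW rk t) with hSg
  have hsub : ∀ t ∈ Sg, cylW m t ⊆ {ω : ℕ → Q | ∃ k ≤ m, ω k ∈ {q' : Q | rk q' = 0}} := by
    intro t ht ω hω
    rw [hSg, Finset.mem_filter] at ht
    obtain ⟨-, ht0, htc⟩ := ht
    obtain ⟨k, hk⟩ := chain_hits rk t htc (by rw [ht0]; exact hrk q)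
    refine ⟨k.val, Nat.lt_succ_iff.mp k.isLt, ?_⟩
    have := hω k.val (Nat.lt_succ_iff.mp k.isLt)
    rw [extW_val] at this
    simpa [this] using hk
  have hdisj : (↑Sg : Set (Fin (m+1) → Q)).PairwiseDisjoint (cylW m) := by
    intro t _ t' _ hne
    exact disjoint_cylW hne
  have hunion : P q (⋃ t ∈ Sg, cylW m t) = ∑ t ∈ Sg, P q (cylW m t) :=
    measure_biUnion_finset hdisj fun t _ => measurable_cylW t
  calc ε ^ m ≤ Hfun κ rk m q := Hfun_ge κ rk ε hε1 hstep m q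
    _ = ∑ t : Fin (m+1) → Q, if t 0 = q ∧ ChainW rk t then wgt κ t else 0 :=
        Hfun_eq_sum κ rk m q
    _ = ∑ t ∈ Sg, wgt κ t := by
        rw [hSg, Finset.sum_filter]
    _ = ∑ t ∈ Sg, P q (cylW m t) := by
        refine Finset.sum_congr rfl fun t ht => ?_
        rw [hSg, Finset.mem_filter] at ht
        rw [P_cylW κ P hP q t, Set.indicator_of_mem (by simp [ht.2.1]) _, Pi.one_apply, one_mul]
    _ = P q (⋃ t ∈ Sg, cylW m t) := hunion.symm
    _ ≤ P q {ω | ∃ k ≤ m, ω k ∈ {q' : Q | rk q' = 0}} := by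
        refine measure_mono ?_
        exact Set.iUnion₂_subset hsub
end

section
/- Let Q be a finite nonempty state space, κ a Markov kernel from Q to Q, F ⊆ Q, and P_q the trajectory measure of the chain (X_n) started at q. Suppose there are ε > 0 and m ≥ 1 such that for every state q, P_q( ∃ k ≤ m, X_k ∈ F ) ≥ ε. Then for every start state q, the chain visits F infinitely often almost surely: P_q( { k | X_k ∈ F } is infinite ) = 1. (This is the probabilistic core of the paper's Lemma: under the composite strategy, the accepting set F of the Büchi game is visited infinitely often with probability 1.) -/
open MeasureTheory ProbabilityTheory ENNReal

namespace TrajAux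
set_option linter.unusedSectionVars false

variable {Q : Type*} [Fintype Q] [MeasurableSpace Q] [DiscreteMeasurableSpace Q]

noncomputable def W (κ : Kernel Q Q) (q : Q) (t : ℕ) (w : ℕ → Q) : ℝ≥0∞ :=
  Set.indicator ({q} : Set Q) (1 : Q → ℝ≥0∞) (w 0) *
    ∏ i ∈ Finset.range t, κ (w i) {w (i + 1)}

def ext (t : ℕ) (v : Fin (t + 1) → Q) : ℕ → Q := fun k => v ⟨min k t, by omega⟩

lemma ext_le {t k : ℕ} (h : k ≤ t) (v : Fin (t + 1) → Q) :
    ext t v k = v ⟨k, by omega⟩ := by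
  simp [ext, Nat.min_eq_left h]

lemma measurable_cyl (t : ℕ) (w : ℕ → Q) :
    MeasurableSet {ω : ℕ → Q | ∀ k ≤ t, ω k = w k} := by
  have h : {ω : ℕ → Q | ∀ k ≤ t, ω k = w k}
      = ⋂ k, ⋂ _ : k ≤ t, (fun ω : ℕ → Q => ω k) ⁻¹' {w k} := by
    ext ω; simp
  rw [h]
  exact MeasurableSet.iInter fun k => MeasurableSet.iInter fun _ =>
    (measurable_pi_apply k) (MeasurableSet.singleton _)

lemma measure_dep (κ : Kernel Q Q) (P : Q → Measure (ℕ → Q)) (hP : IsTrajMeasure κ P)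
    (q : Q) (t : ℕ) (p : (Fin (t + 1) → Q) → Prop) [DecidablePred p] :
    P q {ω | p (fun i => ω i)} =
      ∑ v ∈ Finset.univ.filter p, W κ q t (ext t v) := by
  classical
  have key : ∀ (v : Fin (t + 1) → Q) (ω : ℕ → Q),
      ω ∈ {ω : ℕ → Q | ∀ k ≤ t, ω k = ext t v k} ↔ (fun i : Fin (t + 1) => ω i) = v := by
    intro v ω
    constructor
    · intro h; funext i
      have hi : (i : ℕ) ≤ t := Nat.lt_succ_iff.mp i.isLt
      rw [h i hi, ext_le hi]
    · intro h k hk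
      rw [ext_le hk, ← h]
  have hset : {ω : ℕ → Q | p (fun i => ω i)} =
      ⋃ v ∈ Finset.univ.filter p, {ω : ℕ → Q | ∀ k ≤ t, ω k = ext t v k} := by
    ext ω
    simp only [Set.mem_setOf_eq, Set.mem_iUnion, Finset.mem_filter, Finset.mem_univ, true_and]
    constructor
    · intro h
      exact ⟨fun i => ω i, h, (key (fun i => ω i) ω).mpr rfl⟩
    · rintro ⟨v, hv, h⟩
      rwa [(key v ω).mp h]
  rw [hset, measure_biUnion_finset]
  · exact Finset.sum_congr rfl fun v _ => hP q t (ext t v)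
  · intro v hv v' hv' hne
    rw [Function.onFun, Set.disjoint_left]
    intro ω h1 h2
    exact hne (((key v ω).mp h1).symm.trans ((key v' ω).mp h2))
  · exact fun v _ => measurable_cyl t (ext t v)

def Av (F : Set Q) (n T : ℕ) : Set (ℕ → Q) := {ω | ∀ k, n ≤ k → k ≤ T → ω k ∉ F}

def pAv (F : Set Q) (n T : ℕ) (v : Fin (T + 1) → Q) : Prop :=
  ∀ k, n ≤ k → ∀ h2 : k ≤ T, v ⟨k, by omega⟩ ∉ F

lemma Av_eq (F : Set Q) (n T : ℕ) :
    Av F n T = {ω | pAv F n T (fun i => ω i)} := rfl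

lemma measurable_Av (F : Set Q) (n T : ℕ) : MeasurableSet (Av F n T) := by
  have h : Av F n T = ⋂ k, ⋂ _ : n ≤ k, ⋂ _ : k ≤ T, (fun ω : ℕ → Q => ω k) ⁻¹' Fᶜ := by
    ext ω; simp [Av]
  rw [h]
  exact MeasurableSet.iInter fun k => MeasurableSet.iInter fun _ =>
    MeasurableSet.iInter fun _ =>
      (measurable_pi_apply k) (MeasurableSet.compl (by measurability))

lemma avoid_le (P : Q → Measure (ℕ → Q))
    (hprob : ∀ q, IsProbabilityMeasure (P q)) (F : Set Q) (ε : ℝ≥0∞) (m : ℕ)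
    (hhit : ∀ q : Q, ε ≤ P q {ω | ∃ k ≤ m, ω k ∈ F}) (q : Q) :
    P q (Av F 0 m) ≤ 1 - ε := by
  haveI := hprob q
  have hc : (Av F 0 m)ᶜ = {ω : ℕ → Q | ∃ k ≤ m, ω k ∈ F} := by
    ext ω; simp [Av]
  have h1 : P q (Av F 0 m) + P q ((Av F 0 m)ᶜ) = 1 := by
    rw [measure_add_measure_compl (measurable_Av F 0 m), measure_univ]
  have h2 : ε ≤ P q ((Av F 0 m)ᶜ) := by rw [hc]; exact hhit q
  have hε1 : ε ≠ ⊤ := ne_top_of_le_ne_top one_ne_top ((hhit q).trans prob_le_one)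
  refine ENNReal.le_sub_of_add_le_right hε1 ?_
  calc P q (Av F 0 m) + ε ≤ P q (Av F 0 m) + P q ((Av F 0 m)ᶜ) := add_le_add_right h2 _
    _ = 1 := h1

lemma cons_mk_zero {m : ℕ} (x : Q) (b : Fin m → Q) (h : 0 < m + 1) :
    (Fin.cons x b : Fin (m + 1) → Q) ⟨0, h⟩ = x := by
  have e : (⟨0, h⟩ : Fin (m + 1)) = 0 := Fin.ext (by simp)
  rw [e, Fin.cons_zero]

lemma cons_mk_succ {m : ℕ} (x : Q) (b : Fin m → Q) (j : ℕ) (h : j + 1 < m + 1) :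
    (Fin.cons x b : Fin (m + 1) → Q) ⟨j + 1, h⟩ = b ⟨j, by omega⟩ := by
  have e : (⟨j + 1, h⟩ : Fin (m + 1)) = Fin.succ ⟨j, by omega⟩ := rfl
  rw [e, Fin.cons_succ]

lemma pAv_cons {F : Set Q} {m : ℕ} (x : Q) (b : Fin m → Q) :
    pAv F 0 m (Fin.cons x b) ↔ (x ∉ F ∧ ∀ j, b j ∉ F) := by
  constructor
  · intro h
    refine ⟨?_, fun j => ?_⟩
    · have := h 0 (Nat.zero_le _) (Nat.zero_le _)
      rwa [cons_mk_zero] at this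
    · have := h (j.1 + 1) (Nat.zero_le _) (by omega)
      rw [cons_mk_succ] at this
      simpa using this
  · rintro ⟨hx, hb⟩ k _ hk
    match k with
    | 0 => rwa [cons_mk_zero]
    | (j + 1) => rw [cons_mk_succ]; exact hb _


def Phi (t m : ℕ) (a : Fin (t + 1) → Q) (b : Fin m → Q) : Fin (t + m + 1) → Q :=
  fun i => if h : i.1 ≤ t then a ⟨i.1, by omega⟩ else b ⟨i.1 - (t + 1), by omega⟩

lemma Phi_le {t m : ℕ} (a : Fin (t + 1) → Q) (b : Fin m → Q) {k : ℕ} (h : k ≤ t)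
    (hk : k < t + m + 1) : Phi t m a b ⟨k, hk⟩ = a ⟨k, by omega⟩ := dif_pos h

lemma Phi_gt {t m : ℕ} (a : Fin (t + 1) → Q) (b : Fin m → Q) {k : ℕ} (h : t < k)
    (hk : k < t + m + 1) : Phi t m a b ⟨k, hk⟩ = b ⟨k - (t + 1), by omega⟩ :=
  dif_neg (by simp only [Fin.val_mk]; omega)

lemma Phi_suffix {t m : ℕ} (a : Fin (t + 1) → Q) (b : Fin m → Q) (j : Fin m)
    (hk : t + 1 + j.1 < t + m + 1) : Phi t m a b ⟨t + 1 + j.1, hk⟩ = b j := by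
  rw [Phi_gt a b (by omega)]
  congr 1
  exact Fin.ext (by simp)

lemma Phi_bij (t m : ℕ) :
    Function.Bijective (fun ab : (Fin (t + 1) → Q) × (Fin m → Q) => Phi t m ab.1 ab.2) := by
  refine Function.bijective_iff_has_inverse.mpr
    ⟨fun v => (fun i => v ⟨i.1, by omega⟩, fun j => v ⟨t + 1 + j.1, by omega⟩),
      fun ab => ?_, fun v => ?_⟩
  · refine Prod.ext ?_ ?_
    · funext i
      simp only
      rw [Phi_le ab.1 ab.2 (Nat.lt_succ_iff.mp i.isLt)]
    · funext j
      simp only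
      rw [Phi_gt ab.1 ab.2 (by omega)]
      exact congrArg ab.2 (Fin.ext (by simp only [Fin.val_mk]; omega))
  · funext i
    by_cases h : i.1 ≤ t
    · simp only [Phi, dif_pos h]
    · simp only [Phi, dif_neg h]
      congr 1
      refine Fin.ext ?_
      simp only [Fin.val_mk]
      omega

lemma W_split (κ : Kernel Q Q) (q : Q) (t m : ℕ) (a : Fin (t + 1) → Q) (b : Fin m → Q) :
    W κ q (t + m) (ext (t + m) (Phi t m a b)) =
      W κ q t (ext t a) *
        W κ (a (Fin.last t)) m (ext m (Fin.cons (a (Fin.last t)) b)) := by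
  set w := ext (t + m) (Phi t m a b) with hw
  have hw_pre : ∀ k, k ≤ t → w k = ext t a k := by
    intro k hk
    rw [hw, ext_le (show k ≤ t + m by omega), ext_le hk, Phi_le a b hk]
  have hw_suf : ∀ j, j ≤ m → w (t + j) = ext m (Fin.cons (a (Fin.last t)) b) j := by
    intro j hj
    rw [hw, ext_le (show t + j ≤ t + m by omega), ext_le hj]
    match j with
    | 0 =>
      rw [cons_mk_zero]
      simp only [Nat.add_zero]
      rw [Phi_le a b (le_refl t)]
      rfl
    | (j' + 1) =>
      rw [cons_mk_succ, Phi_gt a b (by omega)]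
      congr 1
      exact Fin.ext (by simp; omega)
  have h0 : w 0 = ext t a 0 := hw_pre 0 (Nat.zero_le t)
  have hind : Set.indicator ({a (Fin.last t)} : Set Q) (1 : Q → ℝ≥0∞)
      (ext m (Fin.cons (a (Fin.last t)) b) 0) = 1 := by
    rw [ext_le (Nat.zero_le m), cons_mk_zero, Set.indicator_of_mem (Set.mem_singleton _), Pi.one_apply]
  have hp1 : ∏ i ∈ Finset.range t, κ (w i) {w (i + 1)}
      = ∏ i ∈ Finset.range t, κ (ext t a i) {ext t a (i + 1)} := by
    refine Finset.prod_congr rfl fun i hi => ?_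
    have hi' := Finset.mem_range.mp hi
    rw [hw_pre i (by omega), hw_pre (i + 1) (by omega)]
  have hp2 : ∏ i ∈ Finset.range m, κ (w (t + i)) {w (t + i + 1)}
      = ∏ i ∈ Finset.range m,
          κ (ext m (Fin.cons (a (Fin.last t)) b) i)
            {ext m (Fin.cons (a (Fin.last t)) b) (i + 1)} := by
    refine Finset.prod_congr rfl fun i hi => ?_
    have hi' := Finset.mem_range.mp hi
    rw [hw_suf i (by omega), show t + i + 1 = t + (i + 1) from rfl, hw_suf (i + 1) (by omega)]
  show Set.indicator ({q} : Set Q) (1 : Q → ℝ≥0∞) (w 0) *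
      ∏ i ∈ Finset.range (t + m), κ (w i) {w (i + 1)} = _
  rw [Finset.prod_range_add, h0, hp1, hp2]
  unfold W
  rw [hind]
  ring

lemma pAv_Phi {F : Set Q} (n t m : ℕ) (hnt : n ≤ t) (a : Fin (t + 1) → Q) (b : Fin m → Q) :
    pAv F n (t + m) (Phi t m a b) ↔ (pAv F n t a ∧ ∀ j, b j ∉ F) := by
  constructor
  · intro h
    refine ⟨fun k h1 h2 => ?_, fun j => ?_⟩
    · have := h k h1 (by omega)
      rwa [Phi_le a b h2] at this
    · have := h (t + 1 + j.1) (by omega) (by omega)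
      rwa [Phi_suffix a b j] at this
  · rintro ⟨h1, h2⟩ k hk1 hk2
    by_cases hkt : k ≤ t
    · rw [Phi_le a b hkt]; exact h1 k hk1 hkt
    · rw [Phi_gt a b (by omega)]; exact h2 _


open scoped Classical

lemma inner_sum (κ : Kernel Q Q) (P : Q → Measure (ℕ → Q)) (hP : IsTrajMeasure κ P)
    (hprob : ∀ q, IsProbabilityMeasure (P q)) (F : Set Q) (ε : ℝ≥0∞) (m : ℕ)
    (hhit : ∀ q : Q, ε ≤ P q {ω | ∃ k ≤ m, ω k ∈ F}) {q' : Q} (hq' : q' ∉ F) :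
    ∑ b : Fin m → Q, (if ∀ j, b j ∉ F then W κ q' m (ext m (Fin.cons q' b)) else 0)
      ≤ 1 - ε := by
  refine le_trans ?_ (avoid_le P hprob F ε m hhit q')
  rw [Av_eq, measure_dep κ P hP q' m (pAv F 0 m), Finset.sum_filter]
  have hbij : Function.Bijective
      (fun xb : Q × (Fin m → Q) => (Fin.cons xb.1 xb.2 : Fin (m + 1) → Q)) := by
    refine Function.bijective_iff_has_inverse.mpr
      ⟨fun v => (v 0, Fin.tail v), fun xb => ?_, fun v => ?_⟩
    · simp [Fin.tail_cons]
    · simp [Fin.cons_self_tail]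
  rw [← Fintype.sum_bijective _ hbij
      (fun xb : Q × (Fin m → Q) =>
        if pAv F 0 m (Fin.cons xb.1 xb.2) then W κ q' m (ext m (Fin.cons xb.1 xb.2)) else 0)
      (fun v : Fin (m + 1) → Q => if pAv F 0 m v then W κ q' m (ext m v) else 0)
      (fun xb => rfl)]
  rw [Fintype.sum_prod_type]
  refine le_trans (le_of_eq ?_)
    (Finset.single_le_sum (f := fun x : Q => ∑ b : Fin m → Q,
      if pAv F 0 m (Fin.cons x b) then W κ q' m (ext m (Fin.cons x b)) else 0)
      (fun _ _ => zero_le) (Finset.mem_univ q'))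
  refine Finset.sum_congr rfl fun b _ => ?_
  have hiff : pAv F 0 m (Fin.cons q' b) ↔ ∀ j, b j ∉ F := by
    rw [pAv_cons]; simp [hq']
  rw [if_congr hiff.symm rfl rfl]

lemma step (κ : Kernel Q Q) (P : Q → Measure (ℕ → Q)) (hP : IsTrajMeasure κ P)
    (hprob : ∀ q, IsProbabilityMeasure (P q)) (F : Set Q) (ε : ℝ≥0∞) (m : ℕ)
    (hhit : ∀ q : Q, ε ≤ P q {ω | ∃ k ≤ m, ω k ∈ F})
    (q : Q) (n t : ℕ) (hnt : n ≤ t) :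
    P q (Av F n (t + m)) ≤ (1 - ε) * P q (Av F n t) := by
  rw [Av_eq F n (t + m), Av_eq F n t,
    measure_dep κ P hP q (t + m) (pAv F n (t + m)), measure_dep κ P hP q t (pAv F n t),
    Finset.sum_filter, Finset.sum_filter]
  rw [← Fintype.sum_bijective _ (Phi_bij t m)
      (fun ab : (Fin (t + 1) → Q) × (Fin m → Q) =>
        if pAv F n (t + m) (Phi t m ab.1 ab.2)
        then W κ q (t + m) (ext (t + m) (Phi t m ab.1 ab.2)) else 0)
      (fun v : Fin (t + m + 1) → Q =>
        if pAv F n (t + m) v then W κ q (t + m) (ext (t + m) v) else 0)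
      (fun ab => rfl)]
  rw [Fintype.sum_prod_type]
  have hstep1 : ∀ a : Fin (t + 1) → Q,
      (∑ b : Fin m → Q, if pAv F n (t + m) (Phi t m a b)
          then W κ q (t + m) (ext (t + m) (Phi t m a b)) else 0)
      = (if pAv F n t a then W κ q t (ext t a) *
          ∑ b : Fin m → Q, (if ∀ j, b j ∉ F then
            W κ (a (Fin.last t)) m (ext m (Fin.cons (a (Fin.last t)) b)) else 0) else 0) := by
    intro a
    by_cases hpa : pAv F n t a
    · rw [if_pos hpa, Finset.mul_sum]
      refine Finset.sum_congr rfl fun b _ => ?_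
      by_cases hb : ∀ j, b j ∉ F
      · rw [if_pos ((pAv_Phi n t m hnt a b).mpr ⟨hpa, hb⟩), if_pos hb, W_split]
      · rw [if_neg (fun hc => hb ((pAv_Phi n t m hnt a b).mp hc).2), if_neg hb, mul_zero]
    · rw [if_neg hpa]
      refine Finset.sum_eq_zero fun b _ => ?_
      exact if_neg (fun hc => hpa ((pAv_Phi n t m hnt a b).mp hc).1)
  calc (∑ a : Fin (t + 1) → Q, ∑ b : Fin m → Q, if pAv F n (t + m) (Phi t m a b)
          then W κ q (t + m) (ext (t + m) (Phi t m a b)) else 0)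
      = ∑ a : Fin (t + 1) → Q, (if pAv F n t a then W κ q t (ext t a) *
          ∑ b : Fin m → Q, (if ∀ j, b j ∉ F then
            W κ (a (Fin.last t)) m (ext m (Fin.cons (a (Fin.last t)) b)) else 0) else 0) :=
        Finset.sum_congr rfl fun a _ => hstep1 a
    _ ≤ ∑ a : Fin (t + 1) → Q, (if pAv F n t a then W κ q t (ext t a) * (1 - ε) else 0) := by
        refine Finset.sum_le_sum fun a _ => ?_
        by_cases hpa : pAv F n t a
        · rw [if_pos hpa, if_pos hpa]
          exact mul_le_mul_right (inner_sum κ P hP hprob F ε m hhit (hpa t hnt le_rfl)) _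
        · rw [if_neg hpa, if_neg hpa]
    _ = (1 - ε) * ∑ a : Fin (t + 1) → Q, (if pAv F n t a then W κ q t (ext t a) else 0) := by
        rw [Finset.mul_sum]
        refine Finset.sum_congr rfl fun a _ => ?_
        by_cases hpa : pAv F n t a <;> simp [hpa, mul_comm]

lemma main_bound (κ : Kernel Q Q) (P : Q → Measure (ℕ → Q)) (hP : IsTrajMeasure κ P)
    (hprob : ∀ q, IsProbabilityMeasure (P q)) (F : Set Q) (ε : ℝ≥0∞) (m : ℕ)
    (hhit : ∀ q : Q, ε ≤ P q {ω | ∃ k ≤ m, ω k ∈ F})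
    (q : Q) (n N : ℕ) :
    P q (Av F n (n + N * m)) ≤ (1 - ε) ^ N := by
  haveI := hprob q
  induction N with
  | zero => simp only [pow_zero]; exact prob_le_one
  | succ N ih =>
    have he : n + (N + 1) * m = (n + N * m) + m := by ring
    rw [he, pow_succ]
    calc P q (Av F n (n + N * m + m)) ≤ (1 - ε) * P q (Av F n (n + N * m)) :=
          step κ P hP hprob F ε m hhit q n (n + N * m) (by omega)
      _ ≤ (1 - ε) * (1 - ε) ^ N := mul_le_mul_right ih _
      _ = (1 - ε) ^ N * (1 - ε) := mul_comm _ _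

lemma tail_null (κ : Kernel Q Q) (P : Q → Measure (ℕ → Q)) (hP : IsTrajMeasure κ P)
    (hprob : ∀ q, IsProbabilityMeasure (P q)) (F : Set Q) (ε : ℝ≥0∞) (hε : 0 < ε) (m : ℕ)
    (hhit : ∀ q : Q, ε ≤ P q {ω | ∃ k ≤ m, ω k ∈ F})
    (q : Q) (n : ℕ) :
    P q {ω : ℕ → Q | ∀ k, n ≤ k → ω k ∉ F} = 0 := by
  have hsub : ∀ N : ℕ, {ω : ℕ → Q | ∀ k, n ≤ k → ω k ∉ F} ⊆ Av F n (n + N * m) :=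
    fun N ω hω k hk _ => hω k hk
  have hb : ∀ N : ℕ, P q {ω : ℕ → Q | ∀ k, n ≤ k → ω k ∉ F} ≤ (1 - ε) ^ N :=
    fun N => le_trans (measure_mono (hsub N)) (main_bound κ P hP hprob F ε m hhit q n N)
  have hlt : (1 : ℝ≥0∞) - ε < 1 := ENNReal.sub_lt_self one_ne_top one_ne_zero hε.ne'
  have htend := ENNReal.tendsto_pow_atTop_nhds_zero_of_lt_one hlt
  exact le_antisymm (ge_of_tendsto' htend hb) zero_le

lemma infinite_iff (F : Set Q) (ω : ℕ → Q) :
    {k : ℕ | ω k ∈ F}.Infinite ↔ ∀ n, ∃ k, n ≤ k ∧ ω k ∈ F := by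
  constructor
  · intro h n
    by_contra hc
    push_neg at hc
    refine h (Set.Finite.subset (Set.finite_lt_nat n) fun k hk => ?_)
    simp only [Set.mem_setOf_eq] at hk ⊢
    by_contra hk2
    exact hc k (by omega) hk
  · intro h hfin
    obtain ⟨B, hB⟩ := hfin.bddAbove
    obtain ⟨k, hk1, hk2⟩ := h (B + 1)
    have : k ≤ B := hB (show k ∈ {k : ℕ | ω k ∈ F} from hk2)
    omega

end TrajAux

/-- If from every state the chain hits the accepting set `F`
within `m` steps with probability at least `ε > 0`, then from every start state
the chain visits `F` infinitely often almost surely: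
`P q ({k | X k ∈ F} is infinite) = 1`. -/
theorem traj_visits_infinitely_often {Q : Type*} [Fintype Q] [Nonempty Q]
    [MeasurableSpace Q] [DiscreteMeasurableSpace Q]
    (κ : Kernel Q Q) [IsMarkovKernel κ]
    (P : Q → Measure (ℕ → Q)) (hprob : ∀ q, IsProbabilityMeasure (P q))
    (hP : IsTrajMeasure κ P) (F : Set Q)
    (ε : ℝ≥0∞) (hε : 0 < ε) (m : ℕ) (hm : 1 ≤ m)
    (hhit : ∀ q : Q, ε ≤ P q {ω | ∃ k ≤ m, ω k ∈ F}) :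
    ∀ q : Q, P q {ω | {k : ℕ | ω k ∈ F}.Infinite} = 1 := by
  intro q
  haveI := hprob q
  have hGmeas : MeasurableSet {ω : ℕ → Q | {k : ℕ | ω k ∈ F}.Infinite} := by
    have h : {ω : ℕ → Q | {k : ℕ | ω k ∈ F}.Infinite}
        = ⋂ n, ⋃ k, ⋃ _ : n ≤ k, (fun ω : ℕ → Q => ω k) ⁻¹' F := by
      ext ω
      simp only [Set.mem_setOf_eq, Set.mem_iInter, Set.mem_iUnion, Set.mem_preimage,
        exists_prop]
      exact TrajAux.infinite_iff F ω
    rw [h]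
    exact MeasurableSet.iInter fun n => MeasurableSet.iUnion fun k =>
      MeasurableSet.iUnion fun _ => (measurable_pi_apply k) (by measurability)
  have hc0 : P q ({ω : ℕ → Q | {k : ℕ | ω k ∈ F}.Infinite}ᶜ) = 0 := by
    have hsub : {ω : ℕ → Q | {k : ℕ | ω k ∈ F}.Infinite}ᶜ ⊆
        ⋃ n, {ω : ℕ → Q | ∀ k, n ≤ k → ω k ∉ F} := by
      intro ω hω
      simp only [Set.mem_compl_iff, Set.mem_setOf_eq, TrajAux.infinite_iff F ω] at hω
      push_neg at hω
      obtain ⟨n, hn⟩ := hω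
      exact Set.mem_iUnion.mpr ⟨n, fun k hk => hn k hk⟩
    refine le_antisymm ?_ zero_le
    calc P q ({ω : ℕ → Q | {k : ℕ | ω k ∈ F}.Infinite}ᶜ)
        ≤ P q (⋃ n, {ω : ℕ → Q | ∀ k, n ≤ k → ω k ∉ F}) := measure_mono hsub
      _ ≤ ∑' n, P q {ω : ℕ → Q | ∀ k, n ≤ k → ω k ∉ F} := measure_iUnion_le _
      _ = 0 := by
          simp [TrajAux.tail_null κ P hP hprob F ε hε m hhit q]
  exact (prob_compl_eq_zero_iff hGmeas).mp hc0
end
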